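/- arXiv:1810.11417 — 4 statements merged into one kernel-verified Lean document; each statement's English description precedes it below -/
import Mathlib

section
/- Let G be a finite cyclic subgroup of U(2) of order q ≥ 2 that acts freely on the unit sphere S³ ⊂ ℂ² (i.e., g • v = v for some v with ‖v‖ = 1 implies g = 1). Then there exist a generator g of G, a unitary matrix U ∈ U(2), and an integer p with 0 < p < q and gcd(p, q) = 1, such that U g U⁻¹ is the diagonal matrix with diagonal entries exp(2πi/q) and exp(2πip/q). -/
open Complex

/-- The diagonal unitary `2×2` matrix with diagonal entries `exp(2πi/q)` and `exp(2πip/q)`. -/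
noncomputable def lensDiagMatrix (q p : ℤ) : Matrix (Fin 2) (Fin 2) ℂ :=
  Matrix.diagonal ![Complex.exp (2 * Real.pi * Complex.I / q),
                    Complex.exp (2 * Real.pi * Complex.I * p / q)]

namespace LensAux

/-- A vector in `ℂ²` whose hermitian self-pairing is `1` has Euclidean norm `1`. -/
lemma unit_norm {v : EuclideanSpace ℂ (Fin 2)}
    (hv : (starRingEnd ℂ) (v 0) * v 0 + (starRingEnd ℂ) (v 1) * v 1 = 1) : ‖v‖ = 1 := by
  have h1 : ((Complex.normSq (v 0) + Complex.normSq (v 1) : ℝ) : ℂ) = 1 := by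
    push_cast
    rw [Complex.normSq_eq_conj_mul_self, Complex.normSq_eq_conj_mul_self]
    exact hv
  have h2 : Complex.normSq (v 0) + Complex.normSq (v 1) = 1 := by exact_mod_cast h1
  have hn : ∀ z : ℂ, ‖z‖ ^ 2 = Complex.normSq z := fun z => by
    rw [Complex.sq_norm]
  rw [EuclideanSpace.norm_eq, Fin.sum_univ_two, hn, hn, h2, Real.sqrt_one]

lemma fix_eq_one {v : Fin 2 → ℂ} {μ : ℂ}
    (hv : (starRingEnd ℂ) (v 0) * v 0 + (starRingEnd ℂ) (v 1) * v 1 = 1)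
    (h : μ • v = v) : μ = 1 := by
  have e0 := congrFun h 0
  have e1 := congrFun h 1
  simp only [Pi.smul_apply, smul_eq_mul] at e0 e1
  linear_combination (starRingEnd ℂ) (v 0) * e0 + (starRingEnd ℂ) (v 1) * e1 - (μ - 1) * hv

lemma pow_eig {A : Matrix (Fin 2) (Fin 2) ℂ} {v : Fin 2 → ℂ} {μ : ℂ}
    (h : A.mulVec v = μ • v) : ∀ m : ℕ, (A ^ m).mulVec v = μ ^ m • v := by
  intro m
  induction m with
  | zero => simp [Matrix.one_mulVec]
  | succ n ih =>
      rw [pow_succ, ← Matrix.mulVec_mulVec, h, Matrix.mulVec_smul, ih, smul_smul,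
        mul_comm, ← pow_succ]

/-- The second eigenvector: if `v` is a unit eigenvector of a unitary `A`, then the orthogonal
vector `![-(conj v₁), conj v₀]` is also an eigenvector. -/
lemma exists_second_eig {A : Matrix (Fin 2) (Fin 2) ℂ}
    (hA : star A * A = 1) {v : Fin 2 → ℂ} {μ : ℂ} (hμ : μ ≠ 0)
    (hv : (starRingEnd ℂ) (v 0) * v 0 + (starRingEnd ℂ) (v 1) * v 1 = 1)
    (heig : A.mulVec v = μ • v) :
    ∃ μ₂ : ℂ, A.mulVec ![-(starRingEnd ℂ (v 1)), starRingEnd ℂ (v 0)] =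
      μ₂ • ![-(starRingEnd ℂ (v 1)), starRingEnd ℂ (v 0)] := by
  have hId : (star A).mulVec (A.mulVec v) = v := by
    rw [Matrix.mulVec_mulVec, hA, Matrix.one_mulVec]
  rw [heig, Matrix.mulVec_smul] at hId
  have hstar : (star A).mulVec v = μ⁻¹ • v := by
    have := congrArg (fun x => μ⁻¹ • x) hId
    simp only [smul_smul, inv_mul_cancel₀ hμ, one_smul] at this
    exact this
  have hs0 := congrFun hstar 0
  have hs1 := congrFun hstar 1
  simp only [Matrix.mulVec, dotProduct, Fin.sum_univ_two, Matrix.star_apply,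
    Complex.star_def, Pi.smul_apply, smul_eq_mul] at hs0 hs1
  have c0 := congrArg (starRingEnd ℂ) hs0
  have c1 := congrArg (starRingEnd ℂ) hs1
  simp only [map_add, map_mul, Complex.conj_conj, map_inv₀] at c0 c1
  set w := A.mulVec ![-(starRingEnd ℂ (v 1)), starRingEnd ℂ (v 0)] with hw
  have hw0 : w 0 = A 0 0 * (-(starRingEnd ℂ (v 1))) + A 0 1 * starRingEnd ℂ (v 0) := by
    simp [hw, Matrix.mulVec, dotProduct, Fin.sum_univ_two]
  have hw1 : w 1 = A 1 0 * (-(starRingEnd ℂ (v 1))) + A 1 1 * starRingEnd ℂ (v 0) := by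
    simp [hw, Matrix.mulVec, dotProduct, Fin.sum_univ_two]
  have orth : (starRingEnd ℂ) (v 0) * w 0 + (starRingEnd ℂ) (v 1) * w 1 = 0 := by
    rw [hw0, hw1]
    linear_combination (-(starRingEnd ℂ (v 1))) * c0 + (starRingEnd ℂ (v 0)) * c1
  refine ⟨-(v 1) * w 0 + v 0 * w 1, ?_⟩
  funext i
  fin_cases i
  · simp only [Fin.zero_eta, Pi.smul_apply, Matrix.cons_val_zero, smul_eq_mul]
    linear_combination (-(w 0)) * hv + (v 0) * orth
  · simp only [Fin.mk_one, Pi.smul_apply, Matrix.cons_val_one, Matrix.head_cons, smul_eq_mul,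
      Matrix.cons_val_zero]
    linear_combination (-(w 1)) * hv + (v 1) * orth

end LensAux

/-- A finite cyclic subgroup of `U(2)` of order `q ≥ 2` acting freely on the unit sphere
`S³ ⊂ ℂ²` is conjugate, within `U(2)`, to the standard cyclic group generated by the
diagonal matrix `diag(exp(2πi/q), exp(2πip/q))` for some `0 < p < q` with `gcd(p,q) = 1`. -/
theorem cyclic_subgroup_unitary_free_conj_diagonal
    (G : Subgroup (Matrix.unitaryGroup (Fin 2) ℂ)) [Finite G] [IsCyclic G]
    (q : ℕ) (hq : 2 ≤ q) (hcard : Nat.card G = q)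
    (hfree : ∀ g : G, ∀ v : EuclideanSpace ℂ (Fin 2), ‖v‖ = 1 →
        Matrix.mulVec ((g : Matrix.unitaryGroup (Fin 2) ℂ) : Matrix (Fin 2) (Fin 2) ℂ) v = v →
        g = 1) :
    ∃ (g : G) (U : Matrix.unitaryGroup (Fin 2) ℂ) (p : ℤ),
      Subgroup.zpowers g = (⊤ : Subgroup G) ∧
      0 < p ∧ p < (q : ℤ) ∧ Int.gcd p (q : ℤ) = 1 ∧
      (U : Matrix (Fin 2) (Fin 2) ℂ) *
          ((g : Matrix.unitaryGroup (Fin 2) ℂ) : Matrix (Fin 2) (Fin 2) ℂ) *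
          ((U⁻¹ : Matrix.unitaryGroup (Fin 2) ℂ) : Matrix (Fin 2) (Fin 2) ℂ) =
        lensDiagMatrix (q : ℤ) p := by
  classical
  have hq0 : q ≠ 0 := by omega
  haveI : NeZero q := ⟨hq0⟩
  obtain ⟨g₀, hg₀⟩ := IsCyclic.exists_generator (α := G)
  have hord : orderOf g₀ = q := by
    rw [orderOf_eq_card_of_forall_mem_zpowers hg₀, hcard]
  set A : Matrix (Fin 2) (Fin 2) ℂ :=
    ((g₀ : Matrix.unitaryGroup (Fin 2) ℂ) : Matrix (Fin 2) (Fin 2) ℂ) with hAdef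
  have hcoe : ∀ m : ℕ,
      (((g₀ ^ m : G) : Matrix.unitaryGroup (Fin 2) ℂ) : Matrix (Fin 2) (Fin 2) ℂ) = A ^ m := by
    intro m
    norm_cast
  have hAq : A ^ q = 1 := by
    rw [← hcoe]
    have : g₀ ^ q = 1 := by rw [← hord]; exact pow_orderOf_eq_one g₀
    rw [this]
    norm_cast
  have hAmem : star A * A = 1 := ((g₀ : Matrix.unitaryGroup (Fin 2) ℂ)).2.1
  -- find a first eigenvector
  obtain ⟨μ₁, hμ₁⟩ := Module.End.exists_eigenvalue (Matrix.mulVecLin A)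
  obtain ⟨w, hw⟩ := hμ₁.exists_hasEigenvector
  have heigw : A.mulVec w = μ₁ • w := hw.apply_eq_smul
  -- normalize it
  set r : ℝ := Real.sqrt (Complex.normSq (w 0) + Complex.normSq (w 1)) with hrdef
  have hwsum : 0 < Complex.normSq (w 0) + Complex.normSq (w 1) := by
    have hne : w 0 ≠ 0 ∨ w 1 ≠ 0 := by
      by_contra h
      push_neg at h
      exact hw.2 (funext fun i => by fin_cases i <;> simp [h.1, h.2])
    rcases hne with h | h
    · have := Complex.normSq_pos.mpr h
      have := Complex.normSq_nonneg (w 1)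
      linarith
    · have := Complex.normSq_pos.mpr h
      have := Complex.normSq_nonneg (w 0)
      linarith
  have hr : 0 < r := Real.sqrt_pos.mpr hwsum
  have hr2 : (r : ℂ) * r = ((Complex.normSq (w 0) + Complex.normSq (w 1) : ℝ) : ℂ) := by
    rw [← Complex.ofReal_mul, Real.mul_self_sqrt hwsum.le]
  set v₁ : Fin 2 → ℂ := ((r : ℂ))⁻¹ • w with hv₁def
  have hrne : (r : ℂ) ≠ 0 := by
    simp [Complex.ofReal_ne_zero]
    exact hr.ne'
  have hv₁ : (starRingEnd ℂ) (v₁ 0) * v₁ 0 + (starRingEnd ℂ) (v₁ 1) * v₁ 1 = 1 := by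
    have h0 : v₁ 0 = (r : ℂ)⁻¹ * w 0 := rfl
    have h1 : v₁ 1 = (r : ℂ)⁻¹ * w 1 := rfl
    rw [h0, h1]
    simp only [map_mul, map_inv₀, Complex.conj_ofReal]
    have e0 : (starRingEnd ℂ) (w 0) * w 0 = ((Complex.normSq (w 0) : ℝ) : ℂ) :=
      (Complex.normSq_eq_conj_mul_self).symm
    have e1 : (starRingEnd ℂ) (w 1) * w 1 = ((Complex.normSq (w 1) : ℝ) : ℂ) :=
      (Complex.normSq_eq_conj_mul_self).symm
    field_simp
    rw [mul_comm ((r:ℂ)) ((r:ℂ))] at hr2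
    push_cast at hr2 ⊢
    linear_combination e0 + e1 - hr2
  have heig₁ : A.mulVec v₁ = μ₁ • v₁ := by
    rw [hv₁def, Matrix.mulVec_smul, heigw, smul_comm]
  -- primitivity of eigenvalues on unit eigenvectors
  have hprim : ∀ (v : Fin 2 → ℂ) (μ : ℂ),
      (starRingEnd ℂ) (v 0) * v 0 + (starRingEnd ℂ) (v 1) * v 1 = 1 →
      A.mulVec v = μ • v → IsPrimitiveRoot μ q := by
    intro v μ hv heig
    constructor
    · have := LensAux.pow_eig heig q
      rw [hAq, Matrix.one_mulVec] at this
      exact LensAux.fix_eq_one hv this.symm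
    · intro l hl
      have hfix : (A ^ l).mulVec v = v := by
        rw [LensAux.pow_eig heig l, hl, one_smul]
      have hmat : Matrix.mulVec
          (((g₀ ^ l : G) : Matrix.unitaryGroup (Fin 2) ℂ) : Matrix (Fin 2) (Fin 2) ℂ) v = v := by
        rw [hcoe]; exact hfix
      have h1 : (g₀ ^ l : G) = 1 := hfree (g₀ ^ l) (WithLp.toLp 2 v) (LensAux.unit_norm hv) hmat
      rw [← hord]
      exact orderOf_dvd_of_pow_eq_one h1
  have hprim₁ : IsPrimitiveRoot μ₁ q := hprim v₁ μ₁ hv₁ heig₁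
  have hμ₁ne : μ₁ ≠ 0 := by
    intro h
    have := hprim₁.pow_eq_one
    rw [h, zero_pow hq0] at this
    exact zero_ne_one this
  -- second eigenvector
  set v₂ : Fin 2 → ℂ := ![-(starRingEnd ℂ (v₁ 1)), starRingEnd ℂ (v₁ 0)] with hv₂def
  obtain ⟨μ₂, heig₂⟩ := LensAux.exists_second_eig hAmem hμ₁ne hv₁ heig₁
  have hv₂ : (starRingEnd ℂ) (v₂ 0) * v₂ 0 + (starRingEnd ℂ) (v₂ 1) * v₂ 1 = 1 := by
    simp only [hv₂def, Matrix.cons_val_zero, Matrix.cons_val_one, Matrix.head_cons, map_neg,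
      Complex.conj_conj]
    linear_combination hv₁
  have hprim₂ : IsPrimitiveRoot μ₂ q := hprim v₂ μ₂ hv₂ heig₂
  -- express eigenvalues as powers of ζ
  set ζ : ℂ := Complex.exp (2 * Real.pi * Complex.I / q) with hζdef
  have hζ : IsPrimitiveRoot ζ q := Complex.isPrimitiveRoot_exp q hq0
  obtain ⟨a, ha_lt, haζ⟩ := hζ.eq_pow_of_pow_eq_one hprim₁.pow_eq_one
  obtain ⟨b, hb_lt, hbζ⟩ := hζ.eq_pow_of_pow_eq_one hprim₂.pow_eq_one
  have hcopa : Nat.Coprime a q := (hζ.pow_iff_coprime (by omega) a).mp (haζ ▸ hprim₁)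
  have hcopb : Nat.Coprime b q := (hζ.pow_iff_coprime (by omega) b).mp (hbζ ▸ hprim₂)
  obtain ⟨c, -, hc⟩ := Nat.exists_mul_mod_eq_one_of_coprime hcopa (by omega)
  have hcopc : Nat.Coprime c q := by
    have hd1 : Nat.gcd c q ∣ a * c := Dvd.dvd.mul_left (Nat.gcd_dvd_left c q) a
    have hd2 : Nat.gcd c q ∣ q := Nat.gcd_dvd_right c q
    have : Nat.gcd c q ∣ a * c % q := (Nat.dvd_mod_iff hd2).mpr hd1
    rw [hc] at this
    exact Nat.dvd_one.mp this
  have hzmod : ∀ n : ℕ, ζ ^ n = ζ ^ (n % q) := by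
    intro n
    conv_lhs => rw [← Nat.mod_add_div n q]
    rw [pow_add, pow_mul, hζ.pow_eq_one, one_pow, mul_one]
  -- the generator g := g₀ ^ c
  set g : G := g₀ ^ c with hgdef
  have hordg : orderOf g = q := by
    rw [hgdef, orderOf_pow, hord, Nat.Coprime.gcd_eq_one hcopc.symm, Nat.div_one]
  have hgen : Subgroup.zpowers g = (⊤ : Subgroup G) := by
    apply Subgroup.eq_top_of_card_eq
    rw [Nat.card_zpowers, hordg, hcard]
  set p : ℕ := b * c % q with hpdef
  have hp_lt : p < q := Nat.mod_lt _ (by omega)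
  have hcopbc : Nat.Coprime (b * c) q := Nat.Coprime.mul hcopb hcopc
  have hp_pos : 0 < p := by
    rcases Nat.eq_zero_or_pos p with h | h
    · exfalso
      have hdvd : q ∣ b * c := Nat.dvd_of_mod_eq_zero h
      have : q ∣ Nat.gcd (b * c) q := Nat.dvd_gcd hdvd dvd_rfl
      rw [hcopbc] at this
      have := Nat.le_of_dvd one_pos this
      omega
    · exact h
  have hgcdp : Nat.gcd p q = 1 := by
    rw [hpdef, ← Nat.gcd_rec, Nat.gcd_comm]
    exact hcopbc
  -- eigen equations for g's matrix B = A ^ c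
  set B : Matrix (Fin 2) (Fin 2) ℂ := A ^ c with hBdef
  have heigB₁ : B.mulVec v₁ = ζ • v₁ := by
    rw [hBdef, LensAux.pow_eig heig₁ c, ← haζ, ← pow_mul, hzmod, hc, pow_one]
  have heigB₂ : B.mulVec v₂ = ζ ^ p • v₂ := by
    rw [hBdef, LensAux.pow_eig heig₂ c, ← hbζ, ← pow_mul, hzmod]
  -- the conjugating unitary matrix
  set V : Matrix (Fin 2) (Fin 2) ℂ := !![v₁ 0, v₂ 0; v₁ 1, v₂ 1] with hVdef
  have hVstar : star V * V = 1 := by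
    ext i j
    fin_cases i <;> fin_cases j <;>
      simp only [hVdef, Matrix.mul_apply, Fin.sum_univ_two, Matrix.star_apply, Complex.star_def,
        Matrix.one_apply, Matrix.cons_val', Matrix.cons_val_zero, Matrix.cons_val_one,
        Matrix.head_cons, Matrix.head_fin_const, Matrix.empty_val', Matrix.cons_val_fin_one,
        Matrix.of_apply, Fin.zero_eta, Fin.mk_one, if_true, if_false, Fin.isValue,
        ne_eq, one_ne_zero, zero_ne_one, not_false_eq_true, Matrix.one_apply_ne,
        Matrix.one_apply_eq]
    · exact hv₁
    · show (starRingEnd ℂ) (v₁ 0) * v₂ 0 + (starRingEnd ℂ) (v₁ 1) * v₂ 1 = 0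
      simp only [hv₂def, Matrix.cons_val_zero, Matrix.cons_val_one, Matrix.head_cons]
      ring
    · show (starRingEnd ℂ) (v₂ 0) * v₁ 0 + (starRingEnd ℂ) (v₂ 1) * v₁ 1 = 0
      simp only [hv₂def, Matrix.cons_val_zero, Matrix.cons_val_one, Matrix.head_cons, map_neg,
        Complex.conj_conj]
      ring
    · show (starRingEnd ℂ) (v₂ 0) * v₂ 0 + (starRingEnd ℂ) (v₂ 1) * v₂ 1 = 1
      exact hv₂
  have hVmem : V ∈ Matrix.unitaryGroup (Fin 2) ℂ := Matrix.mem_unitaryGroup_iff'.mpr hVstar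
  set u : Matrix.unitaryGroup (Fin 2) ℂ := ⟨V, hVmem⟩ with hudef
  refine ⟨g, u⁻¹, (p : ℤ), hgen, by exact_mod_cast hp_pos, by exact_mod_cast hp_lt, ?_, ?_⟩
  · rw [Int.gcd_natCast_natCast]
    exact hgcdp
  · -- the conjugation identity
    have hBcoe : ((g : Matrix.unitaryGroup (Fin 2) ℂ) : Matrix (Fin 2) (Fin 2) ℂ) = B := by
      rw [hgdef, hcoe]
    have hUinv : (((u⁻¹)⁻¹ : Matrix.unitaryGroup (Fin 2) ℂ) : Matrix (Fin 2) (Fin 2) ℂ) = V := by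
      rw [inv_inv]
    have hUcoe : ((u⁻¹ : Matrix.unitaryGroup (Fin 2) ℂ) : Matrix (Fin 2) (Fin 2) ℂ) = star V := by
      rw [← Unitary.star_eq_inv]
      rfl
    rw [hBcoe, hUinv, hUcoe]
    -- diagonal matrix entries
    set D : Matrix (Fin 2) (Fin 2) ℂ := lensDiagMatrix (q : ℤ) (p : ℤ) with hDdef
    have hD00 : D 0 0 = ζ := by
      simp only [hDdef, lensDiagMatrix, Matrix.diagonal_apply_eq, Matrix.cons_val_zero]
      rw [hζdef]
      norm_num
    have hD11 : D 1 1 = ζ ^ p := by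
      simp only [hDdef, lensDiagMatrix, Matrix.diagonal_apply_eq, Matrix.cons_val_one,
        Matrix.head_cons]
      rw [hζdef, ← Complex.exp_nat_mul]
      congr 1
      push_cast
      ring
    have hD01 : D 0 1 = 0 := by
      simp [hDdef, lensDiagMatrix, Matrix.diagonal_apply_ne]
    have hD10 : D 1 0 = 0 := by
      simp [hDdef, lensDiagMatrix, Matrix.diagonal_apply_ne]
    -- key identity B * V = V * D
    have hb10 := congrFun heigB₁ 0
    have hb11 := congrFun heigB₁ 1
    have hb20 := congrFun heigB₂ 0
    have hb21 := congrFun heigB₂ 1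
    simp only [Matrix.mulVec, dotProduct, Fin.sum_univ_two, Pi.smul_apply,
      smul_eq_mul] at hb10 hb11 hb20 hb21
    have key : B * V = V * D := by
      ext i j
      fin_cases i <;> fin_cases j <;>
        simp only [hVdef, Matrix.mul_apply, Fin.sum_univ_two, Matrix.cons_val', 
          Matrix.cons_val_zero, Matrix.cons_val_one, Matrix.head_cons, Matrix.empty_val',
          Matrix.cons_val_fin_one, Matrix.head_fin_const, Matrix.of_apply, Fin.zero_eta,
          Fin.mk_one, Fin.isValue]
      · rw [hD00, hD10]; linear_combination hb10
      · rw [hD01, hD11]; linear_combination hb20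
      · rw [hD00, hD10]; linear_combination hb11
      · rw [hD01, hD11]; linear_combination hb21
    calc star V * B * V = star V * (V * D) := by rw [mul_assoc, key]
      _ = (star V * V) * D := by rw [mul_assoc]
      _ = D := by rw [hVstar, one_mul]
end

section
/- The quotient of the unitary group U(2) by its center is isomorphic as a group to SO(3): there exists a group isomorphism U(2) / Z(U(2)) ≃* SO(3). -/
/-- `SO(3)`: the group of real orthogonal `3×3` matrices of determinant `1`,
realized as a subgroup of the orthogonal group `O(3)`. -/
def SO3 : Subgroup (Matrix.orthogonalGroup (Fin 3) ℝ) where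
  carrier := {A | ((A : Matrix (Fin 3) (Fin 3) ℝ)).det = 1}
  one_mem' := by simp
  mul_mem' := by
    intro a b ha hb
    simp only [Set.mem_setOf_eq, Matrix.UnitaryGroup.mul_val, Matrix.det_mul] at *
    rw [ha, hb, mul_one]
  inv_mem' := by
    intro a ha
    simp only [Set.mem_setOf_eq, Matrix.UnitaryGroup.inv_val, Matrix.star_eq_conjTranspose,
      Matrix.det_conjTranspose, star_trivial] at *
    exact ha

open Matrix Complex Kronecker
noncomputable section
namespace U2SO3

def σ : Fin 4 → Matrix (Fin 2) (Fin 2) ℂ :=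
  ![1, !![0,1;1,0], !![0,-I;I,0], !![1,0;0,-1]]

/-- matrix of X ↦ U X W in the Pauli basis. -/
def g (U W : Matrix (Fin 2) (Fin 2) ℂ) : Matrix (Fin 4) (Fin 4) ℂ :=
  fun i j => (σ i * U * σ j * W).trace / 2

lemma g_apply (U W : Matrix (Fin 2) (Fin 2) ℂ) (i j : Fin 4) :
    g U W i j = (σ i * U * σ j * W).trace / 2 := rfl

lemma complete (M : Matrix (Fin 2) (Fin 2) ℂ) :
    ∑ i : Fin 4, ((σ i * M).trace / 2) • σ i = M := by
  ext p q
  fin_cases p <;> fin_cases q <;>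
    simp [σ, Matrix.trace, Matrix.diag, Matrix.mul_apply, Fin.sum_univ_succ,
      Matrix.sum_apply, Matrix.one_apply] <;>
    ring_nf <;> simp [Complex.I_sq] <;> ring_nf

lemma g_one : g 1 1 = 1 := by
  ext i j
  fin_cases i <;> fin_cases j <;>
    simp [g, σ, Matrix.trace, Matrix.diag, Matrix.mul_apply, Fin.sum_univ_succ,
      Matrix.one_apply]

lemma g_mul (U W V X : Matrix (Fin 2) (Fin 2) ℂ) :
    g (U * V) (X * W) = g U W * g V X := by
  ext i k
  have h := complete (V * σ k * X)
  have h2 : σ i * (U * V) * σ k * (X * W) = σ i * U * (V * σ k * X) * W := by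
    simp [mul_assoc]
  rw [Matrix.mul_apply]
  simp only [g]
  rw [h2]
  conv_lhs => rw [← h]
  rw [Finset.mul_sum]
  simp only [Matrix.mul_sum, Matrix.sum_mul, Matrix.mul_smul, Matrix.smul_mul,
    Matrix.trace_sum, Matrix.trace_smul, smul_eq_mul]
  rw [Finset.sum_div]
  refine Finset.sum_congr rfl fun j _ => ?_
  simp only [mul_assoc]
  ring

lemma trace_σ (j : Fin 4) : (σ j).trace = if j = 0 then 2 else 0 := by
  fin_cases j <;> simp [σ, Matrix.trace, Matrix.diag, Fin.sum_univ_succ]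

lemma g_row0 (U W : Matrix (Fin 2) (Fin 2) ℂ) (h : W * U = 1) (j : Fin 4) :
    g U W 0 j = if j = 0 then 1 else 0 := by
  have h0 : σ 0 = 1 := rfl
  have : σ 0 * U * σ j * W = U * σ j * W := by rw [h0, one_mul]
  rw [g, this]
  have : (U * σ j * W).trace = (W * U * σ j).trace := by
    rw [Matrix.trace_mul_cycle]
  rw [this, h, one_mul, trace_σ]
  split <;> norm_num

lemma g_col0 (U W : Matrix (Fin 2) (Fin 2) ℂ) (h : U * W = 1) (i : Fin 4) :
    g U W i 0 = if i = 0 then 1 else 0 := by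
  have h0 : σ 0 = 1 := rfl
  have : σ i * U * σ 0 * W = σ i * (U * W) := by rw [h0]; simp [mul_assoc]
  rw [g, this, h, mul_one, trace_σ]
  split <;> norm_num

lemma σ_conjTranspose (i : Fin 4) : (σ i)ᴴ = σ i := by
  fin_cases i <;> ext p q <;> fin_cases p <;> fin_cases q <;>
    simp [σ, Matrix.conjTranspose_apply]

lemma g_real (U : Matrix (Fin 2) (Fin 2) ℂ) (i j : Fin 4) :
    ((g U Uᴴ i j).re : ℂ) = g U Uᴴ i j := by
  rw [← Complex.conj_eq_iff_re]
  show star (g U Uᴴ i j) = _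
  rw [g]
  rw [star_div₀]
  congr 1
  · rw [← Matrix.trace_conjTranspose]
    simp only [Matrix.conjTranspose_mul, Matrix.conjTranspose_conjTranspose,
      σ_conjTranspose]
    rw [← Matrix.trace_mul_cycle]
    rw [Matrix.trace_mul_comm]
    simp [mul_assoc]
  · norm_num

def Q : Matrix (Fin 2 × Fin 2) (Fin 4) ℂ := fun pq j => σ j pq.1 pq.2

lemma KQ (U W : Matrix (Fin 2) (Fin 2) ℂ) :
    (U ⊗ₖ Wᵀ) * Q = Q * g U W := by
  ext pq j
  obtain ⟨p, q⟩ := pq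
  have h := complete (U * σ j * W)
  have hR : (Q * g U W) (p, q) j = (U * σ j * W) p q := by
    rw [Matrix.mul_apply]
    conv_rhs => rw [← h]
    rw [Matrix.sum_apply]
    refine Finset.sum_congr rfl fun i _ => ?_
    simp [Q, g, Matrix.smul_apply, mul_assoc, mul_comm]
  rw [hR]
  simp only [Matrix.mul_apply, Fintype.sum_prod_type, Matrix.kroneckerMap_apply, Q,
    Matrix.transpose_apply, Finset.sum_mul, Finset.mul_sum]
  rw [Finset.sum_comm]
  refine Finset.sum_congr rfl fun s _ => ?_
  refine Finset.sum_congr rfl fun r _ => ?_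
  ring

def e4 : Fin 2 × Fin 2 ≃ Fin 4 := finProdFinEquiv

def Q4 : Matrix (Fin 4) (Fin 4) ℂ := Q.submatrix e4.symm id

lemma Q4_det : Q4.det ≠ 0 := by
  have : Q4 = !![1,0,0,1; 0,1,-I,0; 0,1,I,0; 1,0,0,-1] := by
    ext i j
    fin_cases i <;> fin_cases j <;> simp [Q4, Q, σ, e4, finProdFinEquiv] <;> rfl
  rw [this]
  simp [Matrix.det_succ_row_zero, Fin.sum_univ_succ, Fin.castSucc, Fin.castAdd, Fin.castLE]
  norm_num [Complex.ext_iff, show (Fin.succAbove (3 : Fin 4) (2 : Fin 3)) = 2 from by decide,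
    show (![0, 1, -I, 0] : Fin 4 → ℂ) 2 = -I from rfl, show (![0, 1, I, 0] : Fin 4 → ℂ) 2 = I from rfl]




lemma det_g (U W : Matrix (Fin 2) (Fin 2) ℂ) (h1 : U * W = 1) :
    (g U W).det = 1 := by
  have key : ((U ⊗ₖ Wᵀ).submatrix e4.symm e4.symm) * Q4 = Q4 * g U W := by
    have := KQ U W
    calc ((U ⊗ₖ Wᵀ).submatrix e4.symm e4.symm) * Q4
        = ((U ⊗ₖ Wᵀ) * Q).submatrix e4.symm id := by
          rw [← Matrix.submatrix_mul_equiv (U ⊗ₖ Wᵀ) Q e4.symm e4.symm id]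
          rfl
      _ = (Q * g U W).submatrix e4.symm id := by rw [this]
      _ = Q4 * g U W := by
          rw [← Matrix.submatrix_mul_equiv Q (g U W) e4.symm (Equiv.refl _) id]
          rfl
  have hdet := congrArg Matrix.det key
  rw [Matrix.det_mul, Matrix.det_mul] at hdet
  have hK : ((U ⊗ₖ Wᵀ).submatrix e4.symm e4.symm).det = 1 := by
    rw [Matrix.det_submatrix_equiv_self, Matrix.det_kronecker]
    have : U.det * W.det = 1 := by rw [← Matrix.det_mul, h1, Matrix.det_one]
    rw [Matrix.det_transpose]
    rw [show (Fintype.card (Fin 2)) = 2 from rfl]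
    calc U.det ^ 2 * W.det ^ 2 = (U.det * W.det)^2 := by ring
    _ = 1 := by rw [this]; norm_num
  rw [hK, one_mul] at hdet
  have := Q4_det
  field_simp at hdet
  exact hdet.symm

def Φm (U : Matrix (Fin 2) (Fin 2) ℂ) : Matrix (Fin 3) (Fin 3) ℝ :=
  fun i j => (g U Uᴴ i.succ j.succ).re

lemma Φm_map (U : Matrix (Fin 2) (Fin 2) ℂ) :
    (Φm U).map (algebraMap ℝ ℂ) = (g U Uᴴ).submatrix Fin.succ Fin.succ := by
  ext i j
  simpa [Φm, Matrix.map_apply] using g_real U i.succ j.succ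

lemma map_inj {A B : Matrix (Fin 3) (Fin 3) ℝ}
    (h : A.map (algebraMap ℝ ℂ) = B.map (algebraMap ℝ ℂ)) : A = B := by
  ext i j
  have := congrArg (fun M : Matrix (Fin 3) (Fin 3) ℂ => M i j) h
  simpa [Matrix.map_apply] using this

lemma submatrix_mul_succ (A B : Matrix (Fin 4) (Fin 4) ℂ)
    (hA : ∀ i : Fin 3, A i.succ 0 = 0) :
    (A * B).submatrix Fin.succ Fin.succ =
      A.submatrix Fin.succ Fin.succ * B.submatrix Fin.succ Fin.succ := by
  ext i j
  simp [Matrix.mul_apply, Matrix.submatrix_apply, Fin.sum_univ_succ, hA]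

lemma Φm_mul (U V : Matrix (Fin 2) (Fin 2) ℂ) (hU : U * Uᴴ = 1) :
    Φm (U * V) = Φm U * Φm V := by
  apply map_inj
  rw [Matrix.map_mul, Φm_map, Φm_map, Φm_map, Matrix.conjTranspose_mul, g_mul]
  exact submatrix_mul_succ _ _ (fun i => by
    rw [g_col0 _ _ hU]
    simp [Fin.succ_ne_zero])

lemma Φm_one : Φm 1 = 1 := by
  apply map_inj
  rw [Φm_map, Matrix.map_one _ (by norm_num) (by norm_num)]
  rw [Matrix.conjTranspose_one, g_one]
  ext i j
  simp [Matrix.submatrix_apply, Matrix.one_apply, Fin.succ_inj]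

lemma g_swap (U W : Matrix (Fin 2) (Fin 2) ℂ) (i j : Fin 4) :
    g U W j i = g W U i j := by
  rw [g, g]
  congr 1
  rw [show σ j * U * σ i * W = (σ j * U) * (σ i * W) by simp [mul_assoc],
    Matrix.trace_mul_comm]
  simp [mul_assoc]

lemma Φm_transpose (U : Matrix (Fin 2) (Fin 2) ℂ) : (Φm U)ᵀ = Φm Uᴴ := by
  ext i j
  simp only [Matrix.transpose_apply, Φm, Matrix.conjTranspose_conjTranspose]
  rw [g_swap]

lemma Φm_orth (U : Matrix (Fin 2) (Fin 2) ℂ) (hU1 : U * Uᴴ = 1) (hU2 : Uᴴ * U = 1) :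
    (Φm U)ᵀ * Φm U = 1 ∧ Φm U * (Φm U)ᵀ = 1 := by
  constructor
  · rw [Φm_transpose, ← Φm_mul Uᴴ U (by simpa using hU2), hU2, Φm_one]
  · rw [Φm_transpose, ← Φm_mul U Uᴴ hU1, hU1, Φm_one]

lemma det_sub (A : Matrix (Fin 4) (Fin 4) ℂ)
    (hA : ∀ j, A 0 j = if j = 0 then 1 else 0) :
    (A.submatrix Fin.succ Fin.succ).det = A.det := by
  conv_rhs => rw [Matrix.det_succ_row_zero]
  rw [Fin.sum_univ_four]
  simp [hA, Fin.succAbove_zero]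

lemma Φm_det (U : Matrix (Fin 2) (Fin 2) ℂ) (hU1 : U * Uᴴ = 1) (hU2 : Uᴴ * U = 1) :
    (Φm U).det = 1 := by
  have h1 := RingHom.map_det (algebraMap ℝ ℂ) (Φm U)
  rw [RingHom.mapMatrix_apply, Φm_map, det_sub _ (g_row0 _ _ hU2), det_g _ _ hU1] at h1
  have h2 : ((Φm U).det : ℂ) = 1 := by
    rw [← h1]; simp [Complex.coe_algebraMap]
  exact_mod_cast h2


lemma star_real (A : Matrix (Fin 3) (Fin 3) ℝ) : star A = Aᵀ := by
  rw [Matrix.star_eq_conjTranspose, Matrix.conjTranspose_eq_transpose_of_trivial]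

lemma uh1 (U : Matrix.unitaryGroup (Fin 2) ℂ) : (U : Matrix (Fin 2) (Fin 2) ℂ) * (U : Matrix (Fin 2) (Fin 2) ℂ)ᴴ = 1 := by
  have := (Matrix.mem_unitaryGroup_iff.mp U.2)
  rwa [Matrix.star_eq_conjTranspose] at this

lemma uh2 (U : Matrix.unitaryGroup (Fin 2) ℂ) : (U : Matrix (Fin 2) (Fin 2) ℂ)ᴴ * (U : Matrix (Fin 2) (Fin 2) ℂ) = 1 := by
  have := (Matrix.mem_unitaryGroup_iff'.mp U.2)
  rwa [Matrix.star_eq_conjTranspose] at this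

lemma Φm_mem_orth (U : Matrix.unitaryGroup (Fin 2) ℂ) :
    Φm ↑U ∈ Matrix.orthogonalGroup (Fin 3) ℝ := by
  rw [Matrix.mem_orthogonalGroup_iff]
  exact (Φm_orth ↑U (uh1 U) (uh2 U)).2

def Φhom : Matrix.unitaryGroup (Fin 2) ℂ →* SO3 where
  toFun U := ⟨⟨Φm ↑U, Φm_mem_orth U⟩, Φm_det ↑U (uh1 U) (uh2 U)⟩
  map_one' := by
    refine Subtype.ext (Subtype.ext ?_)
    simpa using Φm_one
  map_mul' := fun U V => by
    refine Subtype.ext (Subtype.ext ?_)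
    simpa using Φm_mul ↑U ↑V (uh1 U)

lemma conj_eq_of_g (U W : Matrix (Fin 2) (Fin 2) ℂ) (hg : g U W = 1) (j : Fin 4) :
    U * σ j * W = σ j := by
  have h := complete (U * σ j * W)
  have hc : ∀ i, (σ i * (U * σ j * W)).trace / 2 = if i = j then 1 else 0 := by
    intro i
    have := congrFun (congrFun hg i) j
    simp only [g] at this
    rw [show σ i * (U * σ j * W) = σ i * U * σ j * W by simp [mul_assoc], this]
    simp [Matrix.one_apply]
  conv_lhs => rw [← h]
  simp only [hc, ite_smul, one_smul, zero_smul]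
  simp

lemma sigma1_unitary : σ 1 ∈ Matrix.unitaryGroup (Fin 2) ℂ := by
  rw [Matrix.mem_unitaryGroup_iff, Matrix.star_eq_conjTranspose]
  ext i j
  fin_cases i <;> fin_cases j <;>
    simp [σ, Matrix.mul_apply, Fin.sum_univ_succ, Matrix.one_apply]

lemma sigma3_unitary : σ 3 ∈ Matrix.unitaryGroup (Fin 2) ℂ := by
  rw [Matrix.mem_unitaryGroup_iff, Matrix.star_eq_conjTranspose]
  ext i j
  fin_cases i <;> fin_cases j <;>
    simp [σ, Matrix.mul_apply, Fin.sum_univ_succ, Matrix.one_apply]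

lemma scalar_of_commutes (M : Matrix (Fin 2) (Fin 2) ℂ)
    (h1 : M * σ 1 = σ 1 * M) (h3 : M * σ 3 = σ 3 * M) :
    M = M 0 0 • (1 : Matrix (Fin 2) (Fin 2) ℂ) := by
  have e01 : M 0 1 = 0 := by
    have := congrFun (congrFun h3 0) 1
    simp [σ, Matrix.mul_apply, Fin.sum_univ_succ] at this
    linear_combination -this / 2
  have e10 : M 1 0 = 0 := by
    have := congrFun (congrFun h3 1) 0
    simp [σ, Matrix.mul_apply, Fin.sum_univ_succ] at this
    linear_combination this / 2
  have e00 : M 1 1 = M 0 0 := by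
    have := congrFun (congrFun h1 0) 1
    simp [σ, Matrix.mul_apply, Fin.sum_univ_succ] at this
    linear_combination -this
  ext i j
  fin_cases i <;> fin_cases j <;>
    simp [Matrix.one_apply, e01, e10, e00]

lemma Φm_apply (U : Matrix (Fin 2) (Fin 2) ℂ) (i j : Fin 3) :
    Φm U i j = (g U Uᴴ i.succ j.succ).re := rfl

lemma Φm_smul_one (a : ℂ) (ha : a * (starRingEnd ℂ) a = 1) :
    Φm (a • (1 : Matrix (Fin 2) (Fin 2) ℂ)) = 1 := by
  have key : ∀ i j : Fin 4,
      σ i * (a • (1 : Matrix (Fin 2) (Fin 2) ℂ)) * σ j *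
        (a • (1 : Matrix (Fin 2) (Fin 2) ℂ))ᴴ
      = (a * (starRingEnd ℂ) a) • (σ i * σ j) := by
    intro i j
    simp only [Matrix.conjTranspose_smul, Matrix.conjTranspose_one, Matrix.mul_smul,
      Matrix.smul_mul, Matrix.mul_one, smul_smul, starRingEnd_apply]
    rw [mul_comm]
  ext i j
  rw [Φm_apply, g_apply, key, ha, one_smul]
  have h2 : (σ i.succ * σ j.succ).trace / 2 = g 1 1 i.succ j.succ := by
    simp [g_apply]
  rw [h2, g_one]
  simp [Matrix.one_apply, Fin.succ_inj, apply_ite Complex.re]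

lemma ker_eq_center : Φhom.ker = Subgroup.center (Matrix.unitaryGroup (Fin 2) ℂ) := by
  ext U
  constructor
  · intro hU
    rw [MonoidHom.mem_ker] at hU
    have hΦ : Φm ↑U = 1 := congrArg (fun A : SO3 => A.1.1) hU
    have hmap : (g (↑U : Matrix (Fin 2) (Fin 2) ℂ) (↑U : Matrix (Fin 2) (Fin 2) ℂ)ᴴ).submatrix
        Fin.succ Fin.succ = 1 := by
      rw [← Φm_map, hΦ, Matrix.map_one _ (by norm_num) (by norm_num)]
    have hg : g ↑U (↑U : Matrix (Fin 2) (Fin 2) ℂ)ᴴ = 1 := by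
      ext i j
      refine Fin.cases ?_ (fun i' => ?_) i
      · rw [g_row0 _ _ (uh2 U)]
        simp [Matrix.one_apply, eq_comm]
      · refine Fin.cases ?_ (fun j' => ?_) j
        · rw [g_col0 _ _ (uh1 U)]
          simp [Matrix.one_apply, Fin.succ_ne_zero]
        · have := congrFun (congrFun hmap i') j'
          simpa [Matrix.one_apply, Fin.succ_inj] using this
    have hcom : ∀ j, (↑U : Matrix (Fin 2) (Fin 2) ℂ) * σ j *
        (↑U : Matrix (Fin 2) (Fin 2) ℂ)ᴴ = σ j :=
      conj_eq_of_g _ _ hg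
    have hcomm : ∀ j, (↑U : Matrix (Fin 2) (Fin 2) ℂ) * σ j =
        σ j * (↑U : Matrix (Fin 2) (Fin 2) ℂ) := by
      intro j
      have h := congrArg (fun X => X * (↑U : Matrix (Fin 2) (Fin 2) ℂ)) (hcom j)
      simp only [mul_assoc, uh2 U, mul_one] at h
      simpa [mul_assoc] using h
    have hscalar := scalar_of_commutes ↑U (hcomm 1) (hcomm 3)
    rw [Subgroup.mem_center_iff]
    intro V
    refine Subtype.ext ?_
    rw [Matrix.UnitaryGroup.mul_val, Matrix.UnitaryGroup.mul_val, hscalar,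
      Matrix.mul_smul, Matrix.smul_mul, Matrix.mul_one, Matrix.one_mul]
  · intro hU
    have hcomm := Subgroup.mem_center_iff.mp hU
    have h1 : (↑U : Matrix (Fin 2) (Fin 2) ℂ) * σ 1 =
        σ 1 * (↑U : Matrix (Fin 2) (Fin 2) ℂ) := by
      have h := congrArg (fun A : Matrix.unitaryGroup (Fin 2) ℂ =>
        (A : Matrix (Fin 2) (Fin 2) ℂ)) (hcomm ⟨σ 1, sigma1_unitary⟩)
      simpa [Matrix.UnitaryGroup.mul_val] using h.symm
    have h3 : (↑U : Matrix (Fin 2) (Fin 2) ℂ) * σ 3 =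
        σ 3 * (↑U : Matrix (Fin 2) (Fin 2) ℂ) := by
      have h := congrArg (fun A : Matrix.unitaryGroup (Fin 2) ℂ =>
        (A : Matrix (Fin 2) (Fin 2) ℂ)) (hcomm ⟨σ 3, sigma3_unitary⟩)
      simpa [Matrix.UnitaryGroup.mul_val] using h.symm
    have hscalar := scalar_of_commutes ↑U h1 h3
    set a := (↑U : Matrix (Fin 2) (Fin 2) ℂ) 0 0 with ha_def
    have ha : a * (starRingEnd ℂ) a = 1 := by
      have h := uh1 U
      rw [hscalar] at h
      have h2 := congrFun (congrFun h 0) 0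
      have h3 : (starRingEnd ℂ) a * a = 1 := by
        simpa [Matrix.conjTranspose_smul, Matrix.mul_smul, Matrix.smul_mul,
          Matrix.one_apply, smul_smul] using h2
      rw [mul_comm] at h3
      exact h3
    rw [MonoidHom.mem_ker]
    refine Subtype.ext (Subtype.ext ?_)
    show Φm ↑U = 1
    rw [hscalar]
    exact Φm_smul_one a ha

def zMat (c s : ℝ) : Matrix (Fin 2) (Fin 2) ℂ := !![(⟨c, s⟩ : ℂ), 0; 0, 1]

def xMat (c s : ℝ) : Matrix (Fin 2) (Fin 2) ℂ :=
  !![(⟨(c+1)/2, s/2⟩ : ℂ), (⟨(c-1)/2, s/2⟩ : ℂ); (⟨(c-1)/2, s/2⟩ : ℂ), (⟨(c+1)/2, s/2⟩ : ℂ)]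

def Rz (c s : ℝ) : Matrix (Fin 3) (Fin 3) ℝ := !![c, s, 0; -s, c, 0; 0, 0, 1]
def Rx (c s : ℝ) : Matrix (Fin 3) (Fin 3) ℝ := !![1,0,0; 0,c,s; 0,-s,c]

lemma zMat_unitary (c s : ℝ) (h : c^2+s^2=1) :
    zMat c s ∈ Matrix.unitaryGroup (Fin 2) ℂ := by
  rw [Matrix.mem_unitaryGroup_iff, Matrix.star_eq_conjTranspose]
  ext i j
  fin_cases i <;> fin_cases j <;>
    simp [zMat, Matrix.mul_apply, Matrix.conjTranspose_apply, Fin.sum_univ_succ,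
      Matrix.one_apply, Complex.ext_iff] <;>
    (try constructor) <;> nlinarith [h]

lemma xMat_unitary (c s : ℝ) (h : c^2+s^2=1) :
    xMat c s ∈ Matrix.unitaryGroup (Fin 2) ℂ := by
  rw [Matrix.mem_unitaryGroup_iff, Matrix.star_eq_conjTranspose]
  ext i j
  fin_cases i <;> fin_cases j <;>
    simp [xMat, Matrix.mul_apply, Matrix.conjTranspose_apply, Fin.sum_univ_succ,
      Matrix.one_apply, Complex.ext_iff] <;>
    (try constructor) <;> nlinarith [h]

lemma Φm_zMat (c s : ℝ) (h : c^2+s^2=1) : Φm (zMat c s) = Rz c s := by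
  ext i j
  fin_cases i <;> fin_cases j <;>
    simp [Φm, g, σ, zMat, Rz, Matrix.trace, Matrix.diag, Matrix.mul_apply,
      Matrix.conjTranspose_apply, Fin.sum_univ_succ, Complex.div_ofNat_re,
      Matrix.vecHead, Matrix.vecTail, Function.comp] <;>
    nlinarith [h]

lemma Φm_xMat (c s : ℝ) (h : c^2+s^2=1) : Φm (xMat c s) = Rx c s := by
  ext i j
  fin_cases i <;> fin_cases j <;>
    simp [Φm, g, σ, xMat, Rx, Matrix.trace, Matrix.diag, Matrix.mul_apply,
      Matrix.conjTranspose_apply, Fin.sum_univ_succ, Complex.div_ofNat_re,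
      Matrix.vecHead, Matrix.vecTail, Function.comp] <;>
    nlinarith [h]


lemma RzRx (c1 s1 c2 s2 : ℝ) :
    Rz c1 s1 * Rx c2 s2 = !![c1, s1*c2, s1*s2; -s1, c1*c2, c1*s2; 0, -s2, c2] := by
  ext i j
  fin_cases i <;> fin_cases j <;>
    simp [Rz, Rx, Matrix.mul_apply, Fin.sum_univ_succ] <;> ring

lemma Φhom_surjective : Function.Surjective Φhom := by
  rintro ⟨⟨M, hMorth⟩, hMdet⟩
  have hdet : M.det = 1 := hMdet
  have hM1 : Mᵀ * M = 1 := by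
    have := Matrix.mem_unitaryGroup_iff'.mp hMorth
    rwa [star_real] at this
  have hM2 : M * Mᵀ = 1 := by
    have := Matrix.mem_unitaryGroup_iff.mp hMorth
    rwa [star_real] at this
  have hcol : (M 0 2)^2 + (M 1 2)^2 + (M 2 2)^2 = 1 := by
    have h := congrFun (congrFun hM1 2) 2
    simp [Matrix.mul_apply, Matrix.transpose_apply, Fin.sum_univ_succ,
      Matrix.one_apply] at h
    nlinarith [h]
  set s2 : ℝ := Real.sqrt (1 - (M 2 2)^2) with hs2def
  have hs2 : s2^2 = 1 - (M 2 2)^2 := by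
    rw [hs2def]
    exact Real.sq_sqrt (by nlinarith)
  have hs2n : 0 ≤ s2 := Real.sqrt_nonneg _
  have h2 : (M 2 2)^2 + s2^2 = 1 := by nlinarith
  obtain ⟨c1, s1, h1, hx, hy⟩ : ∃ c1 s1 : ℝ, c1^2 + s1^2 = 1 ∧
      M 0 2 = s1 * s2 ∧ M 1 2 = c1 * s2 := by
    by_cases hs0 : s2 = 0
    · have hxy : (M 0 2)^2 + (M 1 2)^2 = 0 := by nlinarith
      have hx0 : M 0 2 = 0 := by nlinarith [sq_nonneg (M 0 2), sq_nonneg (M 1 2)]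
      have hy0 : M 1 2 = 0 := by nlinarith [sq_nonneg (M 0 2), sq_nonneg (M 1 2)]
      exact ⟨1, 0, by norm_num, by rw [hx0, hs0]; ring, by rw [hy0, hs0]; ring⟩
    · refine ⟨M 1 2 / s2, M 0 2 / s2, ?_, by field_simp, by field_simp⟩
      field_simp
      nlinarith
  set Pz : Matrix.unitaryGroup (Fin 2) ℂ := ⟨_, zMat_unitary c1 s1 h1⟩ with hPz
  set Px : Matrix.unitaryGroup (Fin 2) ℂ := ⟨_, xMat_unitary (M 2 2) s2 h2⟩ with hPx
  set P : Matrix.unitaryGroup (Fin 2) ℂ := Pz * Px with hPdef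
  set R : Matrix (Fin 3) (Fin 3) ℝ := Rz c1 s1 * Rx (M 2 2) s2 with hRdef
  have hP : Φm ↑P = R := by
    rw [hPdef, Matrix.UnitaryGroup.mul_val, Φm_mul _ _ (uh1 Pz), hRdef]
    rw [show (Pz : Matrix (Fin 2) (Fin 2) ℂ) = zMat c1 s1 from rfl,
      show (Px : Matrix (Fin 2) (Fin 2) ℂ) = xMat (M 2 2) s2 from rfl,
      Φm_zMat c1 s1 h1, Φm_xMat (M 2 2) s2 h2]
  have hR2 : R * Rᵀ = 1 := by
    rw [← hP]
    exact (Φm_orth _ (uh1 P) (uh2 P)).2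
  have hRdet : R.det = 1 := by
    rw [← hP]
    exact Φm_det _ (uh1 P) (uh2 P)
  set N : Matrix (Fin 3) (Fin 3) ℝ := Rᵀ * M with hNdef
  have hRR := RzRx c1 s1 (M 2 2) s2
  have hN1 : Nᵀ * N = 1 := by
    rw [hNdef, Matrix.transpose_mul, Matrix.transpose_transpose]
    calc Mᵀ * R * (Rᵀ * M) = Mᵀ * (R * Rᵀ) * M := by
          simp [Matrix.mul_assoc]
      _ = 1 := by rw [hR2, Matrix.mul_one, hM1]
  have hNdet : N.det = 1 := by
    rw [hNdef, Matrix.det_mul, Matrix.det_transpose, hRdet, hdet, mul_one]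
  have hN302 : N 0 2 = 0 := by
    simp only [hNdef, hRdef, hRR]
    simp [Matrix.mul_apply, Matrix.transpose_apply, Fin.sum_univ_succ, hx, hy]
    try ring
  have hN312 : N 1 2 = 0 := by
    simp only [hNdef, hRdef, hRR]
    simp [Matrix.mul_apply, Matrix.transpose_apply, Fin.sum_univ_succ, hx, hy]
    linear_combination (M 2 2 * s2) * h1
  have hN322 : N 2 2 = 1 := by
    simp only [hNdef, hRdef, hRR]
    simp [Matrix.mul_apply, Matrix.transpose_apply, Fin.sum_univ_succ, hx, hy]
    linear_combination s2^2 * h1 + h2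
  clear_value N R P Pz Px s2
  clear hRR
  have hN20 : N 2 0 = 0 := by
    have h := congrFun (congrFun hN1 0) 2
    simp [Matrix.mul_apply, Matrix.transpose_apply, Fin.sum_univ_succ,
      Matrix.one_apply, hN302, hN312, hN322] at h
    linear_combination h
  have hN21 : N 2 1 = 0 := by
    have h := congrFun (congrFun hN1 1) 2
    simp [Matrix.mul_apply, Matrix.transpose_apply, Fin.sum_univ_succ,
      Matrix.one_apply, hN302, hN312, hN322] at h
    linear_combination h
  have e1 : (N 0 0)^2 + (N 1 0)^2 = 1 := by
    have h := congrFun (congrFun hN1 0) 0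
    simp [Matrix.mul_apply, Matrix.transpose_apply, Fin.sum_univ_succ,
      Matrix.one_apply, hN20] at h
    linear_combination h
  have e2 : (N 0 1)^2 + (N 1 1)^2 = 1 := by
    have h := congrFun (congrFun hN1 1) 1
    simp [Matrix.mul_apply, Matrix.transpose_apply, Fin.sum_univ_succ,
      Matrix.one_apply, hN21] at h
    linear_combination h
  have e3 : N 0 0 * N 0 1 + N 1 0 * N 1 1 = 0 := by
    have h := congrFun (congrFun hN1 0) 1
    simp [Matrix.mul_apply, Matrix.transpose_apply, Fin.sum_univ_succ,
      Matrix.one_apply, hN20, hN21] at h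
    linear_combination h
  have e4 : N 0 0 * N 1 1 - N 0 1 * N 1 0 = 1 := by
    have h := hNdet
    rw [Matrix.det_fin_three] at h
    rw [hN302, hN312, hN322, hN20, hN21] at h
    linear_combination h
  have hq : N 1 1 = N 0 0 := by
    linear_combination (- N 1 1) * e1 + (N 1 0) * e3 + (N 0 0) * e4
  have hr : N 1 0 = - N 0 1 := by
    linear_combination (- N 0 1) * e1 + (N 0 0) * e3 - (N 1 0) * e4
  have hpq : (N 0 0)^2 + (N 0 1)^2 = 1 := by
    rw [hq] at e2
    linarith [e2]
  have hNRz : N = Rz (N 0 0) (N 0 1) := by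
    ext i j
    fin_cases i <;> fin_cases j <;>
      simp [Rz, hq, hr, hN302, hN312, hN322, hN20, hN21]
  set Z' : Matrix.unitaryGroup (Fin 2) ℂ := ⟨_, zMat_unitary (N 0 0) (N 0 1) hpq⟩ with hZ'
  refine ⟨P * Z', ?_⟩
  refine Subtype.ext (Subtype.ext ?_)
  show Φm ↑(P * Z') = M
  rw [Matrix.UnitaryGroup.mul_val, Φm_mul _ _ (uh1 P), hP,
    show (Z' : Matrix (Fin 2) (Fin 2) ℂ) = zMat (N 0 0) (N 0 1) from rfl,
    Φm_zMat _ _ hpq, ← hNRz, hNdef]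
  calc R * (Rᵀ * M) = (R * Rᵀ) * M := by rw [Matrix.mul_assoc]
    _ = M := by rw [hR2, Matrix.one_mul]

end U2SO3

/-- The quotient of the unitary group `U(2)` by its center is isomorphic,
as a group, to `SO(3)`. -/
theorem unitaryGroup_two_quotient_center_iso_SO3 :
    Nonempty ((Matrix.unitaryGroup (Fin 2) ℂ ⧸
        Subgroup.center (Matrix.unitaryGroup (Fin 2) ℂ)) ≃* SO3) := by
  refine ⟨(QuotientGroup.quotientMulEquivOfEq U2SO3.ker_eq_center.symm).trans
    (QuotientGroup.quotientKerEquivOfSurjective _ U2SO3.Φhom_surjective)⟩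
end
end

section
/- Let p and q be coprime integers with 0 < p < q, and define f : ℚ → ℚ by f(d) = (⌈d⌉ − d)⁻¹. Then the Hirzebruch–Jung algorithm starting from 𝔡₁ = q/p terminates: there exists n ≥ 0 such that the n-th iterate f^[n](q/p) is an integer (has denominator 1); moreover, for every m ≤ n the iterate satisfies f^[m](q/p) > 1, so that every partial quotient 𝔢 = ⌈f^[m](q/p)⌉ satisfies 𝔢 ≥ 2. -/
/-- The Hirzebruch–Jung step `d ↦ (⌈d⌉ − d)⁻¹` on rationals. -/
def hjStep (d : ℚ) : ℚ := (⌈d⌉ - d)⁻¹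

private lemma hj_den_int_sub (n : ℤ) (d : ℚ) : ((n : ℚ) - d).den = d.den := by
  apply Nat.dvd_antisymm
  · have h := Rat.add_den_dvd (n : ℚ) (-d)
    simpa [sub_eq_add_neg] using h
  · have hd : d = (n : ℚ) - ((n : ℚ) - d) := by ring
    have h := Rat.add_den_dvd (n : ℚ) (-((n : ℚ) - d))
    rw [← sub_eq_add_neg, ← hd] at h
    rw [show ((n : ℚ) - d) = -(d - (n : ℚ)) by ring, Rat.neg_den]
    simpa using h

private lemma hj_inv_den {x : ℚ} (hx : 0 < x) : (x⁻¹).den = x.num.natAbs := by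
  have hnum : 0 < x.num := Rat.num_pos.mpr hx
  have hnz : x.num.natAbs ≠ 0 := by omega
  have c : Nat.Coprime ((x.den : ℤ)).natAbs x.num.natAbs := by
    simpa [Nat.coprime_comm] using x.reduced
  have : x⁻¹ = (⟨(x.den : ℤ), x.num.natAbs, hnz, c⟩ : ℚ) := by
    rw [Rat.mk_eq_divInt, Rat.inv_def]
    congr 1
    omega
  rw [this]

private lemma hj_step_lt {d : ℚ} (hd : 1 < d) (h : d.den ≠ 1) :
    1 < hjStep d ∧ (hjStep d).den < d.den := by
  set x : ℚ := (⌈d⌉ : ℚ) - d with hxdef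
  have hx0 : 0 < x := by
    have hle : d ≤ (⌈d⌉ : ℚ) := Int.le_ceil d
    have hne : d ≠ (⌈d⌉ : ℚ) := by
      intro h'
      apply h
      rw [h']
      exact Rat.den_intCast _
    have : d < (⌈d⌉ : ℚ) := lt_of_le_of_ne hle hne
    linarith
  have hx1 : x < 1 := by
    have := Int.ceil_lt_add_one d
    simp only [hxdef]
    linarith
  have hxden : x.den = d.den := hj_den_int_sub _ _
  have hstep : hjStep d = x⁻¹ := rfl
  constructor
  · rw [hstep]
    exact (one_lt_inv_iff₀).mpr ⟨hx0, hx1⟩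
  · rw [hstep, hj_inv_den hx0]
    have h1 : x.num < (x.den : ℤ) := Rat.lt_one_iff_num_lt_denom.mpr hx1
    have h2 : 0 < x.num := Rat.num_pos.mpr hx0
    rw [← hxden]
    omega

private lemma hj_aux : ∀ b : ℕ, ∀ d : ℚ, d.den = b → 1 < d →
    ∃ n, ((hjStep^[n]) d).den = 1 ∧ ∀ m ≤ n, 1 < (hjStep^[m]) d := by
  intro b
  induction b using Nat.strong_induction_on with
  | _ b ih =>
    intro d hden hd
    by_cases h : d.den = 1
    · refine ⟨0, h, ?_⟩
      intro m hm
      interval_cases m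
      simpa using hd
    · obtain ⟨h1, h2⟩ := hj_step_lt hd h
      obtain ⟨n, hn, hall⟩ := ih (hjStep d).den (hden ▸ h2) (hjStep d) rfl h1
      refine ⟨n + 1, by simpa [Function.iterate_succ_apply] using hn, ?_⟩
      intro m hm
      cases m with
      | zero => simpa using hd
      | succ m =>
        rw [Function.iterate_succ_apply]
        exact hall m (by omega)

/-- For coprime integers `0 < p < q`, the Hirzebruch–Jung algorithm starting from
`𝔡₁ = q/p` terminates: some iterate of `d ↦ (⌈d⌉ − d)⁻¹` at `q/p` is an integer, and up to
that point every iterate is `> 1`, so every partial quotient `⌈𝔡⌉` is `≥ 2`. -/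
theorem hirzebruchJung_terminates (p q : ℤ) (hp : 0 < p) (hpq : p < q)
    (hcop : Int.gcd p q = 1) :
    ∃ n : ℕ, ((hjStep^[n]) ((q : ℚ) / (p : ℚ))).den = 1 ∧
      ∀ m ≤ n, 1 < (hjStep^[m]) ((q : ℚ) / (p : ℚ)) ∧
        2 ≤ ⌈(hjStep^[m]) ((q : ℚ) / (p : ℚ))⌉ := by
  have hp' : (0 : ℚ) < (p : ℚ) := by exact_mod_cast hp
  have hd : 1 < (q : ℚ) / (p : ℚ) := by
    rw [one_lt_div hp']
    exact_mod_cast hpq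
  obtain ⟨n, hn, hall⟩ := hj_aux _ ((q : ℚ) / (p : ℚ)) rfl hd
  refine ⟨n, hn, ?_⟩
  intro m hm
  have h1 := hall m hm
  refine ⟨h1, ?_⟩
  have : (1 : ℤ) < ⌈(hjStep^[m]) ((q : ℚ) / (p : ℚ))⌉ := by
    rw [Int.lt_ceil]
    exact_mod_cast h1
  omega
end

section
/- Let ℓ ≥ 1 be an integer, and define F : ℂ → ℂ by F(z) = z^ℓ / |z|^{ℓ−1} for z ≠ 0. Then at every point z ≠ 0, F is differentiable as a map of real vector spaces ℂ → ℂ, and the determinant of its real derivative (a real-linear endomorphism of ℂ ≅ ℝ²) equals ℓ. In particular, F pulls back the standard area form of ℂ to ℓ times the standard area form on ℂ ∖ {0}. -/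
open Complex ContinuousLinearMap

lemma det_a_id_add_b_conj (a b : ℂ) :
    LinearMap.det (((a • ContinuousLinearMap.id ℝ ℂ +
        b • (Complex.conjCLE : ℂ ≃L[ℝ] ℂ).toContinuousLinearMap : ℂ →L[ℝ] ℂ)) :
          ℂ →ₗ[ℝ] ℂ) = Complex.normSq a - Complex.normSq b := by
  rw [← LinearMap.det_toMatrix Complex.basisOneI, Matrix.det_fin_two]
  simp [LinearMap.toMatrix_apply, Complex.normSq_apply]
  ring



lemma hasFDerivAt_aux (m : ℕ) (z : ℂ) (hz : z ≠ 0) :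
    HasFDerivAt (fun w : ℂ => w ^ (m + 1) * (((Complex.normSq w ^ ((m : ℝ)/2) : ℝ)) : ℂ)⁻¹)
      (((((m : ℝ)/2 + 1 : ℝ) : ℂ) * z ^ m / (((Complex.normSq z ^ ((m : ℝ)/2) : ℝ)) : ℂ)) •
          ContinuousLinearMap.id ℝ ℂ +
        ((-(((m : ℝ)/2 : ℝ) : ℂ)) * z ^ (m + 2) /
            (((Complex.normSq z ^ ((m : ℝ)/2) * Complex.normSq z : ℝ)) : ℂ)) •
          (Complex.conjCLE : ℂ ≃L[ℝ] ℂ).toContinuousLinearMap) z := by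
  have hS : (0:ℝ) < Complex.normSq z := Complex.normSq_pos.2 hz
  have hu : (0:ℝ) < Complex.normSq z ^ ((m : ℝ)/2) := Real.rpow_pos_of_pos hS _
  have hre : HasFDerivAt (fun w : ℂ => w.re) Complex.reCLM z := Complex.reCLM.hasFDerivAt
  have him : HasFDerivAt (fun w : ℂ => w.im) Complex.imCLM z := Complex.imCLM.hasFDerivAt
  have hnormSq : HasFDerivAt (fun w : ℂ => Complex.normSq w)
      ((z.re • Complex.reCLM + z.re • Complex.reCLM) +
        (z.im • Complex.imCLM + z.im • Complex.imCLM)) z := by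
    exact ((hre.mul hre).add (him.mul him)).congr_of_eventuallyEq
      (Filter.Eventually.of_forall fun w => by simp [Complex.normSq_apply])
  have hrpow := hnormSq.rpow_const (p := (m : ℝ)/2) (Or.inl hS.ne')
  have hofReal := Complex.ofRealCLM.hasFDerivAt.comp z hrpow
  have hQne : (((Complex.normSq z ^ ((m : ℝ)/2) : ℝ)) : ℂ) ≠ 0 := by
    exact_mod_cast hu.ne'
  have hinv := (hasFDerivAt_inv' (𝕜 := ℝ) (R := ℂ) hQne).comp z hofReal
  have hpow : HasFDerivAt (fun w : ℂ => w ^ (m + 1))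
      ((ContinuousLinearMap.smulRight (1 : ℂ →L[ℂ] ℂ)
        (((m : ℂ) + 1) * z ^ m)).restrictScalars ℝ) z := by
    have := (hasDerivAt_pow (m + 1) z).hasFDerivAt
    push_cast at this ⊢
    exact this.restrictScalars ℝ
  have hmul := hpow.mul hinv
  refine (hmul.congr_of_eventuallyEq (Filter.Eventually.of_forall fun w => rfl)).congr_fderiv ?_
  symm
  have hconj : (starRingEnd ℂ) z = ((Complex.normSq z : ℝ) : ℂ) / z := by
    rw [eq_div_iff hz, mul_comm, Complex.mul_conj]
  have hrw : Complex.normSq z ^ ((m : ℝ)/2 - 1) =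
      Complex.normSq z ^ ((m : ℝ)/2) / Complex.normSq z := by
    rw [Real.rpow_sub hS, Real.rpow_one]
  refine ContinuousLinearMap.ext fun v => ?_
  simp only [ContinuousLinearMap.add_apply, ContinuousLinearMap.coe_smul',
    Pi.smul_apply, ContinuousLinearMap.coe_comp', Function.comp_apply,
    ContinuousLinearMap.neg_apply, ContinuousLinearMap.mulLeftRight_apply,
    ContinuousLinearMap.coe_restrictScalars', ContinuousLinearMap.smulRight_apply,
    ContinuousLinearMap.one_apply, ContinuousLinearMap.coe_id', _root_.id, id_eq,
    Complex.reCLM_apply, Complex.imCLM_apply, Complex.ofRealCLM_apply,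
    ContinuousLinearEquiv.coe_coe, Complex.conjCLE_apply, smul_eq_mul,
    Complex.real_smul, Complex.coe_smul, hrw]
  have key2 : ((z.re * v.re + z.re * v.re + (z.im * v.im + z.im * v.im) : ℝ) : ℂ)
      = (starRingEnd ℂ) z * v + z * (starRingEnd ℂ) v := by
    push_cast
    simp only [Complex.ext_iff, Complex.add_re, Complex.add_im, Complex.mul_re, Complex.mul_im,
      Complex.conj_re, Complex.conj_im, Complex.ofReal_re, Complex.ofReal_im,
      Complex.mul_re, Complex.mul_im]
    constructor <;> ring
  have hSc : ((Complex.normSq z : ℝ) : ℂ) ≠ 0 := by exact_mod_cast hS.ne'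
  simp only [Complex.ofReal_mul, Complex.ofReal_div]
  rw [key2, hconj]
  simp only [Complex.ofReal_add, Complex.ofReal_div, Complex.ofReal_one,
    Complex.ofReal_natCast, Complex.ofReal_neg]
  set U : ℂ := ((Complex.normSq z ^ ((m : ℝ)/2) : ℝ) : ℂ) with hU
  set Sc : ℂ := ((Complex.normSq z : ℝ) : ℂ) with hScdef
  have hUne : U ≠ 0 := by rw [hU]; exact hQne
  have hScne : Sc ≠ 0 := by rw [hScdef]; exact hSc
  clear_value U Sc
  push_cast
  field_simp
  ring

/-- For `ℓ ≥ 1`, the map `F(z) = z^ℓ / |z|^{ℓ−1}` is real-differentiable at every `z ≠ 0`,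
and the determinant of its real derivative (a real-linear endomorphism of `ℂ ≅ ℝ²`) equals
`ℓ`; that is, `F` pulls back the standard area form of `ℂ` to `ℓ` times the standard area
form on `ℂ ∖ {0}`. -/
theorem real_deriv_det_of_zpow_div_abs_pow (ℓ : ℕ) (hℓ : 1 ≤ ℓ) (z : ℂ) (hz : z ≠ 0) :
    DifferentiableAt ℝ (fun w : ℂ => w ^ ℓ / ((‖w‖ : ℂ) ^ (ℓ - 1))) z ∧
    LinearMap.det
        ((fderiv ℝ (fun w : ℂ => w ^ ℓ / ((‖w‖ : ℂ) ^ (ℓ - 1))) z) :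
          ℂ →ₗ[ℝ] ℂ) = (ℓ : ℝ) := by
  obtain ⟨m, rfl⟩ : ∃ m, ℓ = m + 1 := ⟨ℓ - 1, (Nat.succ_pred_eq_of_pos hℓ).symm⟩
  have hS : (0:ℝ) < Complex.normSq z := Complex.normSq_pos.2 hz
  have hfun : (fun w : ℂ => w ^ (m + 1) / ((‖w‖ : ℂ) ^ (m + 1 - 1))) =
      (fun w : ℂ => w ^ (m + 1) * (((Complex.normSq w ^ ((m : ℝ)/2) : ℝ)) : ℂ)⁻¹) := by
    funext w
    rw [Nat.add_sub_cancel, div_eq_mul_inv]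
    congr 2
    rw [← Complex.ofReal_pow]
    congr 1
    have h0 : (0:ℝ) ≤ ‖w‖ := norm_nonneg w
    rw [Complex.normSq_eq_norm_sq, ← Real.rpow_natCast ‖w‖ 2, ← Real.rpow_mul h0,
      show ((2:ℕ):ℝ) * ((m : ℝ)/2) = (m : ℝ) by push_cast; ring, Real.rpow_natCast]
  rw [hfun]
  have hF := hasFDerivAt_aux m z hz
  refine ⟨hF.differentiableAt, ?_⟩
  rw [hF.fderiv, det_a_id_add_b_conj]
  have hu2 : (Complex.normSq z ^ ((m : ℝ)/2)) ^ 2 = Complex.normSq z ^ m := by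
    rw [← Real.rpow_natCast (Complex.normSq z ^ ((m : ℝ)/2)) 2, ← Real.rpow_mul hS.le,
      show (m : ℝ)/2 * (2 : ℕ) = (m : ℝ) by push_cast; ring, Real.rpow_natCast]
  have hSm : Complex.normSq z ^ m ≠ 0 := pow_ne_zero _ hS.ne'
  simp only [map_div₀, map_mul, map_pow, map_neg, Complex.normSq_ofReal, Complex.normSq_neg]
  have hu2' : Complex.normSq z ^ ((m : ℝ)/2) * Complex.normSq z ^ ((m : ℝ)/2)
      = Complex.normSq z ^ m := by rw [← sq]; exact hu2
  rw [hu2', show Complex.normSq z ^ ((m : ℝ)/2) * Complex.normSq z *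
      (Complex.normSq z ^ ((m : ℝ)/2) * Complex.normSq z)
      = Complex.normSq z ^ (m + 2) by
        rw [show Complex.normSq z ^ ((m : ℝ)/2) * Complex.normSq z *
          (Complex.normSq z ^ ((m : ℝ)/2) * Complex.normSq z)
          = (Complex.normSq z ^ ((m : ℝ)/2) * Complex.normSq z ^ ((m : ℝ)/2)) *
            Complex.normSq z ^ 2 by ring, hu2', ← pow_add]]
  rw [mul_div_assoc, mul_div_assoc, div_self hSm, div_self (pow_ne_zero _ hS.ne')]
  push_cast
  ring
end
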